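/- arXiv:1712.08311 — 2 statements merged into one kernel-verified Lean document; each statement's English description precedes it below -/
import Mathlib

section
/- Let w ∈ W(D_n) have exactly one descent, at l with |l| = 1 (i.e., l ∈ {1, −1}). Set a = w(l), b = w(2), and c = (−1)^{|w⁻¹(1)|} · l, where w⁻¹(1) ∈ {±1,…,±n} is the preimage of 1 under w. Put V₊ = {c} ∪ {2,…,a−1} and V₋ = ∅ if b ∈ {1,−1}, and V₊ = {c} ∪ {2,…,a−1} and V₋ = {b+1,…,−2} ∪ {−c} if b ≤ −2. Define Γ(w) = {(i,j) : i, j ∈ {−1} ∪ {1,…,n−1}, i ≤ j, j ≠ −l, i ≠ (−1)^j l, and w(|j|+1) ≤ i}, and for (i,j) ∈ Γ(w) set k(i,j) = min{x ≥ 1 : |j| + x ≥ n or w(|j|+x+1) > |i|}; let Γ₁(w) = {(i,j) ∈ Γ(w) : k(i,j) = 1} and Γ₂(w) = {(i,j) ∈ Γ(w) : k(i,j) = 2}. Then: (1) the map (i,j) ↦ i is a bijection from Γ₁(w) onto V₊; and (2) the map sending (i,j) to i if |i| = 1 and to −i if |i| ≥ 2 is a bijection from Γ₂(w) onto V₋.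 -/
/-- An element of the Coxeter group `W(D_n)`, modelled as a permutation of `ℤ` fixing
everything outside `{±1,…,±n}`, with `w(−i) = −w(i)` and an even number of
`i ∈ {1,…,n}` with `w(i) < 0`. -/
def IsDPerm (n : ℕ) (w : Equiv.Perm ℤ) : Prop :=
  (∀ i : ℤ, ¬(1 ≤ |i| ∧ |i| ≤ (n : ℤ)) → w i = i) ∧
  (∀ i : ℤ, w (-i) = -(w i)) ∧
  Even ((Finset.Icc (1 : ℤ) (n : ℤ)).filter (fun i => w i < 0)).card

/-- `l` is a descent of `w ∈ W(D_n)`: `l ∈ {−1} ∪ {1,…,n−1}` and `w(l) > w(|l|+1)`. -/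
def IsDescentD (n : ℕ) (w : Equiv.Perm ℤ) (l : ℤ) : Prop :=
  (l = -1 ∨ (1 ≤ l ∧ l ≤ (n : ℤ) - 1)) ∧ w (|l| + 1) < w l

/-- The inversion set of `w ∈ W(D_n)`:
`inv(w) = {(a,b) : a,b ∈ {±1,…,±n}, a > |b|, w⁻¹(a) < w⁻¹(b)}`. -/
def invSetD (n : ℕ) (w : Equiv.Perm ℤ) : Set (ℤ × ℤ) :=
  {p | (1 ≤ |p.1| ∧ |p.1| ≤ (n : ℤ)) ∧ (1 ≤ |p.2| ∧ |p.2| ≤ (n : ℤ)) ∧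
    |p.2| < p.1 ∧ w.symm p.1 < w.symm p.2}

/-- The right weak order on `W(D_n)`: `u ≤ w` iff `inv(u) ⊆ inv(w)`. -/
def weakLED (n : ℕ) (u w : Equiv.Perm ℤ) : Prop :=
  invSetD n u ⊆ invSetD n w

/-- `w` is a least upper bound of `S ⊆ W(D_n)` in the right weak order on `W(D_n)`. -/
def IsWeakLUBD (n : ℕ) (S : Set (Equiv.Perm ℤ)) (w : Equiv.Perm ℤ) : Prop :=
  (∀ x ∈ S, weakLED n x w) ∧ ∀ z, IsDPerm n z → (∀ x ∈ S, weakLED n x z) → weakLED n w z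

/-- `w` is join-irreducible in the right weak order on `W(D_n)`. -/
def IsJoinIrreducibleD (n : ℕ) (w : Equiv.Perm ℤ) : Prop :=
  w ≠ 1 ∧ ∀ u v, IsDPerm n u → IsDPerm n v → IsWeakLUBD n {u, v} w → u = w ∨ v = w

/-- The index set `Q₀ = {−1} ∪ {1,…,n−1}`. -/
def QzeroD (n : ℕ) : Set ℤ := {-1} ∪ Set.Icc 1 ((n : ℤ) - 1)

/-- `Γ(w) = {(i,j) : i,j ∈ {−1} ∪ {1,…,n−1}, i ≤ j, j ≠ −l, i ≠ (−1)ʲ l, w(|j|+1) ≤ i}`,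
for `w ∈ W(D_n)` with unique descent `l`, `|l| = 1`. -/
def GammaD1 (n : ℕ) (w : Equiv.Perm ℤ) (l : ℤ) : Set (ℤ × ℤ) :=
  {p | p.1 ∈ QzeroD n ∧ p.2 ∈ QzeroD n ∧ p.1 ≤ p.2 ∧ p.2 ≠ -l ∧
    p.1 ≠ (-1 : ℤ) ^ p.2.natAbs * l ∧ w (|p.2| + 1) ≤ p.1}

/-- For `(i,j)`, the condition defining `k(i,j) ≤ x` pointwise: `|j| + x ≥ n` or
`w(|j|+x+1) > |i|`. -/
def kCondD1 (n : ℕ) (w : Equiv.Perm ℤ) (p : ℤ × ℤ) (x : ℤ) : Prop :=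
  (n : ℤ) ≤ |p.2| + x ∨ |p.1| < w (|p.2| + x + 1)

/-- `Γ₁(w) = {(i,j) ∈ Γ(w) : k(i,j) = 1}` where
`k(i,j) = min{x ≥ 1 : |j|+x ≥ n or w(|j|+x+1) > |i|}`. -/
def GammaOneD1 (n : ℕ) (w : Equiv.Perm ℤ) (l : ℤ) : Set (ℤ × ℤ) :=
  {p ∈ GammaD1 n w l | kCondD1 n w p 1}

/-- `Γ₂(w) = {(i,j) ∈ Γ(w) : k(i,j) = 2}`. -/
def GammaTwoD1 (n : ℕ) (w : Equiv.Perm ℤ) (l : ℤ) : Set (ℤ × ℤ) :=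
  {p ∈ GammaD1 n w l | ¬ kCondD1 n w p 1 ∧ kCondD1 n w p 2}

/-- Let `w ∈ W(D_n)` have exactly one descent, at `l` with `|l| = 1`.  With `a = w(l)`,
`b = w(2)`, `c = (−1)^{|w⁻¹(1)|}·l`, `V₊ = {c} ∪ {2,…,a−1}` and `V₋ = ∅` if `b ∈ {1,−1}`,
`V₋ = {b+1,…,−2} ∪ {−c}` if `b ≤ −2`, we have:
(1) `(i,j) ↦ i` is a bijection from `Γ₁(w)` onto `V₊`; and
(2) `(i,j) ↦ i` (if `|i| = 1`), `(i,j) ↦ −i` (if `|i| ≥ 2`) is a bijection from `Γ₂(w)`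
onto `V₋`. -/
theorem gamma_bijections_D_typePM1 (n : ℕ) (hn : 4 ≤ n)
    (w : Equiv.Perm ℤ) (hw : IsDPerm n w)
    (l : ℤ) (hl : IsDescentD n w l) (hl' : ∀ l', IsDescentD n w l' → l' = l)
    (hl1 : |l| = 1)
    (a b c : ℤ) (ha : a = w l) (hb : b = w 2)
    (hc : c = (-1 : ℤ) ^ (w.symm 1).natAbs * l)
    (Vp Vm : Set ℤ)
    (hVp : Vp = {c} ∪ Set.Icc 2 (a - 1))
    (hVm : Vm = if b ≤ -2 then Set.Icc (b + 1) (-2) ∪ {-c} else (∅ : Set ℤ)) :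
    Set.BijOn Prod.fst (GammaOneD1 n w l) Vp ∧
    Set.BijOn (fun p : ℤ × ℤ => if |p.1| = 1 then p.1 else -p.1) (GammaTwoD1 n w l) Vm := by
  
  obtain ⟨hfix, hneg, heven⟩ := hw
  have hdom : ∀ x : ℤ, 1 ≤ |x| → |x| ≤ (n:ℤ) → 1 ≤ |w x| ∧ |w x| ≤ (n:ℤ) := by
    intro x h1 h2
    by_contra h
    have hfx : w (w x) = w x := hfix _ (by tauto)
    have hx : w x = x := w.injective hfx
    rw [hx] at h; tauto
  have habs : ∀ x y : ℤ, 1 ≤ x → x ≤ (n:ℤ) → 1 ≤ y → y ≤ (n:ℤ) →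
      |w x| = |w y| → x = y := by
    intro x y hx1 hx2 hy1 hy2 hxy
    rcases abs_eq_abs.mp hxy with h | h
    · exact w.injective h
    · have : w x = w (-y) := by rw [hneg]; exact h
      have := w.injective this
      omega
  have hdom' : ∀ x : ℤ, 1 ≤ x → x ≤ (n:ℤ) → 1 ≤ |w x| ∧ |w x| ≤ (n:ℤ) := by
    intro x hx1 hx2
    exact hdom x (by rwa [abs_of_nonneg (by omega)]) (by rwa [abs_of_nonneg (by omega)])
  -- l is ±1
  have hlc : l = 1 ∨ l = -1 := (abs_eq (by norm_num)).mp hl1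
  -- descent at l : w 2 < a
  have hba : b < a := by
    have h := hl.2; rw [hl1] at h; norm_num at h; rw [ha, hb]; exact h
  -- no descent elsewhere
  have hnd : ∀ x : ℤ, (x = -1 ∨ (1 ≤ x ∧ x ≤ (n:ℤ) - 1)) → x ≠ l → w x ≤ w (|x| + 1) := by
    intro x hx hxl
    by_contra hcon
    exact hxl (hl' x ⟨hx, by omega⟩)
  have hnab : -a < b := by
    have h1 : w (-l) ≤ w (|(-l)| + 1) := by
      rcases hlc with h | h
      · rw [h]; exact hnd (-1) (Or.inl rfl) (by omega)
      · rw [h]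
        simpa using hnd 1 (Or.inr ⟨le_refl 1, by omega⟩) (by omega)
    have h2 : w (-l) = -a := by rw [hneg, ha]
    have h3 : |(-l)| = 1 := by rw [abs_neg, hl1]
    rw [h2, h3] at h1
    norm_num at h1
    rw [← hb] at h1
    rcases lt_or_eq_of_le h1 with h | h
    · exact h
    · exfalso
      have h4 : w (-l) = w 2 := by rw [h2, h, hb]
      have := w.injective h4
      omega
  -- strict mono on [2, n]
  have hmono : ∀ x y : ℤ, 2 ≤ x → x < y → y ≤ (n:ℤ) → w x < w y := by
    intro x y hx2 hxy hyn
    have key : ∀ z : ℤ, 2 ≤ z → z ≤ (n:ℤ) - 1 → w z < w (z + 1) := by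
      intro z hz1 hz2
      have h1 : w z ≤ w (|z| + 1) := hnd z (by omega) (by omega)
      rw [abs_of_nonneg (by omega)] at h1
      rcases lt_or_eq_of_le h1 with h | h
      · exact h
      · exact absurd (w.injective h) (by omega)
    have main : ∀ m : ℤ, x + 1 ≤ m → m ≤ (n:ℤ) → w x < w m :=
      Int.le_induction (fun h => key x hx2 (by omega))
        (fun m hm ih h => lt_trans (ih (by omega)) (key m (by omega) (by omega)))
    exact main y (by omega) hyn
  -- bounds on a
  have haN : 1 ≤ |a| ∧ |a| ≤ (n:ℤ) := by
    rw [ha]; exact hdom l (by rw [hl1]) (by rw [hl1]; omega)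
  have ha1 : 1 ≤ a := by
    rcases abs_cases a with ⟨h, _⟩ | ⟨h, _⟩ <;> omega
  have han : a ≤ (n:ℤ) := by
    rcases abs_cases a with ⟨h, _⟩ | ⟨h, _⟩ <;> omega
  have ha2 : 2 ≤ a := by
    rcases lt_or_ge a 2 with h | h
    · exfalso
      have hb2 : 1 ≤ |b| := by rw [hb]; exact (hdom' 2 (by omega) (by omega)).1
      rcases abs_cases b with ⟨h', _⟩ | ⟨h', _⟩ <;> omega
    · exact h
  have hw1 : (l = 1 ∧ w 1 = a) ∨ (l = -1 ∧ w 1 = -a) := by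
    rcases hlc with h | h
    · left; exact ⟨h, by rw [← h, ← ha]⟩
    · right
      refine ⟨h, ?_⟩
      have : w (-(1:ℤ)) = -(w 1) := hneg 1
      rw [← h] at this
      rw [← ha] at this
      omega
  -- the position p of the value ±1
  set p : ℤ := ((w.symm 1).natAbs : ℤ) with hp_def
  have hp_abs : p = |w.symm 1| := (Int.abs_eq_natAbs _).symm
  have hp_dom : 1 ≤ p ∧ p ≤ (n:ℤ) := by
    rw [hp_abs]
    by_contra h
    have h2 : w (w.symm 1) = w.symm 1 := hfix _ (by tauto)
    simp at h2
    rw [← h2] at h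
    norm_num at h
    omega
  have hwp : w p = 1 ∨ w p = -1 := by
    rcases le_or_gt 0 (w.symm 1) with h | h
    · left
      have : p = w.symm 1 := by rw [hp_abs, abs_of_nonneg h]
      rw [this]; simp
    · right
      have h1 : p = -(w.symm 1) := by rw [hp_abs, abs_of_neg h]
      rw [h1, hneg]; simp
  have hp2 : 2 ≤ p := by
    rcases lt_or_ge p 2 with h | h
    · exfalso
      have hp1 : p = 1 := by omega
      rw [hp1] at hwp
      rcases hw1 with ⟨_, h1⟩ | ⟨_, h1⟩ <;> rcases hwp with h2 | h2 <;> omega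
    · exact h
  have hpn : p ≤ (n:ℤ) := hp_dom.2
  -- value characterizations on positions [2, n]
  have hwple : ∀ x : ℤ, 2 ≤ x → x ≤ (n:ℤ) → x ≤ p → w x ≤ 1 := by
    intro x h1 h2 h3
    rcases lt_or_eq_of_le h3 with h | h
    · have := hmono x p h1 h (by omega)
      omega
    · rw [h]; omega
  have hwpgt : ∀ x : ℤ, 2 ≤ x → x ≤ (n:ℤ) → p < x → 2 ≤ w x := by
    intro x h1 h2 h3
    have h4 : w p < w x := hmono p x hp2 h3 h2
    have h5 : 1 ≤ |w x| := (hdom' x (by omega) h2).1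
    have h6 : x ≠ p := by omega
    have h7 : |w x| ≠ 1 := by
      intro hcon
      apply h6
      apply habs x p (by omega) h2 (by omega) hpn
      rcases hwp with h | h <;> rw [h] <;> simp [hcon]
    rcases abs_cases (w x) with ⟨h8, _⟩ | ⟨h8, _⟩ <;> omega
  -- counting lemma
  have hcount : ∀ S T : Finset ℤ, (∀ x ∈ S, 1 ≤ x ∧ x ≤ (n:ℤ)) →
      (∀ x ∈ S, |w x| ∈ T) → S.card ≤ T.card := by
    intro S T hS hT
    apply Finset.card_le_card_of_injOn (fun x => |w x|) hT
    intro x hx y hy hxy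
    exact habs x y (hS x hx).1 (hS x hx).2 (hS y hy).1 (hS y hy).2 hxy
  have hwnz : ∀ x : ℤ, 2 ≤ x → x ≤ (n:ℤ) → w x ≠ 0 := by
    intro x h1 h2 hcon
    have := (hdom' x (by omega) h2).1
    rw [hcon] at this; norm_num at this
  have hneg_iff : ∀ x : ℤ, 2 ≤ x → x ≤ (n:ℤ) →
      (w x < 0 ↔ x ≤ (if w p = 1 then p - 1 else p)) := by
    intro x h1 h2
    rcases hwp with h | h
    · rw [if_pos h]
      constructor
      · intro h3
        by_contra h4
        rcases eq_or_lt_of_le (by omega : p ≤ x) with h5 | h5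
        · rw [h5] at h; omega
        · have := hwpgt x h1 h2 h5; omega
      · intro h3
        have h4 := hmono x p h1 (by omega) hpn
        have h5 := hwnz x h1 h2
        omega
    · have hne : w p ≠ 1 := by omega
      rw [if_neg hne]
      constructor
      · intro h3
        by_contra h4
        have := hwpgt x h1 h2 (by omega); omega
      · intro h3
        rcases eq_or_lt_of_le h3 with h5 | h5
        · rw [h5]; omega
        · have := hmono x p h1 h5 hpn; omega
  have hbwp : b ≤ 1 := by
    rw [hb]; exact hwple 2 (by omega) (by omega) hp2
  have hbp3 : b ≤ -2 ↔ 3 ≤ p := by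
    constructor
    · intro h3
      by_contra h4
      have hp2' : p = 2 := by omega
      have : w 2 = w p := by rw [hp2']
      rcases hwp with h5 | h5 <;> omega
    · intro h3
      have h4 : w 2 < 0 := by
        rw [hneg_iff 2 (by omega) (by omega)]
        rcases hwp with h5 | h5 <;> simp [h5] <;> omega
      have h5 : w 2 ≠ -1 := by
        intro hcon
        have : (2:ℤ) = p := by
          apply habs 2 p (by omega) (by omega) (by omega) hpn
          rw [hcon]
          rcases hwp with h6 | h6 <;> rw [h6] <;> norm_num
        omega
      omega
  -- the parity lemma : w p = c
  have hcw : w p = c := by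
    have hfilter : (Finset.Icc (1:ℤ) (n:ℤ)).filter (fun i => w i < 0)
        = Finset.Icc (if l = 1 then 2 else 1) (if w p = 1 then p - 1 else p) := by
      ext x
      simp only [Finset.mem_filter, Finset.mem_Icc]
      constructor
      · rintro ⟨⟨hx1, hx2⟩, hx3⟩
        rcases eq_or_lt_of_le hx1 with h | h
        · rw [← h] at hx3
          rcases hw1 with ⟨hle, hwe⟩ | ⟨hle, hwe⟩
          · omega
          · constructor
            · have : l ≠ 1 := by omega
              simp [this]; omega
            · rcases hwp with h5 | h5 <;> simp [h5] <;> omega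
        · have h2 := (hneg_iff x (by omega) hx2).mp hx3
          constructor
          · split_ifs <;> omega
          · exact h2
      · rintro ⟨hx1, hx2⟩
        have hxl : 1 ≤ x := by split_ifs at hx1 <;> omega
        have hxu : x ≤ (n:ℤ) := by split_ifs at hx2 <;> omega
        refine ⟨⟨hxl, hxu⟩, ?_⟩
        rcases eq_or_lt_of_le hxl with h | h
        · rw [← h]
          rcases hw1 with ⟨hle, hwe⟩ | ⟨hle, hwe⟩
          · exfalso; rw [if_pos hle] at hx1; omega
          · omega
        · exact (hneg_iff x (by omega) hxu).mpr hx2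
    rw [hfilter, Int.card_Icc] at heven
    have h1 : Even ((((if w p = 1 then p - 1 else p) + 1 - if l = 1 then 2 else 1).toNat : ℤ)) :=
      (Int.even_coe_nat _).mpr heven
    rw [Int.toNat_of_nonneg (by split_ifs <;> omega)] at h1
    rw [hc]
    rcases hwp with h2 | h2 <;> rcases hw1 with ⟨hle, hwe⟩ | ⟨hle, hwe⟩
    · -- w p = 1, l = 1 : filter card = p - 2, so p even
      have hEp : Even p := by
        rw [if_pos h2, if_pos hle, Int.even_iff] at h1
        rw [Int.even_iff]; omega
      have hEN : Even ((w.symm 1).natAbs) := by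
        rwa [hp_def, Int.even_coe_nat] at hEp
      rw [h2, hEN.neg_one_pow, hle]; norm_num
    · -- w p = 1, l = -1 : card = p - 1, p odd
      have hOp : Odd p := by
        rw [if_pos h2, if_neg (by omega : ¬ l = 1), Int.even_iff] at h1
        rw [Int.odd_iff]; omega
      have hON : Odd ((w.symm 1).natAbs) := by
        rwa [hp_def, Int.odd_coe_nat] at hOp
      rw [h2, hON.neg_one_pow, hle]; norm_num
    · -- w p = -1, l = 1 : card = p - 1, p odd
      have hOp : Odd p := by
        rw [if_neg (by omega : ¬ w p = 1), if_pos hle, Int.even_iff] at h1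
        rw [Int.odd_iff]; omega
      have hON : Odd ((w.symm 1).natAbs) := by
        rwa [hp_def, Int.odd_coe_nat] at hOp
      rw [h2, hON.neg_one_pow, hle]; norm_num
    · -- w p = -1, l = -1 : card = p, p even
      have hEp : Even p := by
        rw [if_neg (by omega : ¬ w p = 1), if_neg (by omega : ¬ l = 1), Int.even_iff] at h1
        rw [Int.even_iff]; omega
      have hEN : Even ((w.symm 1).natAbs) := by
        rwa [hp_def, Int.even_coe_nat] at hEp
      rw [h2, hEN.neg_one_pow, hle]; norm_num
  have hc1 : c = 1 ∨ c = -1 := by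
    rcases hwp with h | h <;> rw [← hcw, h] <;> simp
  -- Qzero helpers
  have hQmem : ∀ j : ℤ, j ∈ QzeroD n → 1 ≤ |j| ∧ |j| ≤ (n:ℤ) - 1 ∧ ((j = -1 ∧ |j| = 1) ∨ j = |j|) := by
    intro j hj
    rcases hj with h | h
    · rw [Set.mem_singleton_iff] at h
      subst h; norm_num; omega
    · rw [Set.mem_Icc] at h
      rw [abs_of_nonneg (by omega)]
      exact ⟨by omega, by omega, Or.inr rfl⟩
  have hQmem' : ∀ j : ℤ, (j = -1 ∨ (1 ≤ j ∧ j ≤ (n:ℤ) - 1)) → j ∈ QzeroD n := by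
    intro j hj
    rcases hj with h | h
    · left; rw [Set.mem_singleton_iff]; exact h
    · right; rw [Set.mem_Icc]; exact h
  -- sign helpers
  have hNN : p.natAbs = (w.symm 1).natAbs := by rw [hp_def]; exact Int.natAbs_natCast _
  have hc' : c = (-1:ℤ)^p.natAbs * l := by rw [hNN, hc]
  have hstep : ∀ k : ℤ, 1 ≤ k → (-1:ℤ)^(k-1).natAbs = -(-1:ℤ)^k.natAbs := by
    intro k hk
    have h1 : k.natAbs = (k-1).natAbs + 1 := by omega
    rw [h1, pow_succ]; ring
  have hparodd : ∀ j : ℤ, |j| = p - 1 → (-1:ℤ)^j.natAbs * l = -c := by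
    intro j hj
    rw [Int.abs_eq_natAbs] at hj
    have h1 : j.natAbs = (p-1).natAbs := by omega
    rw [h1, hstep p (by omega), hc']; ring
  have hpareven : ∀ j : ℤ, |j| = p - 2 → (-1:ℤ)^j.natAbs * l = c := by
    intro j hj
    rw [Int.abs_eq_natAbs] at hj
    have h1 : j.natAbs = (p-2).natAbs := by omega
    have h2 : (p:ℤ) - 2 = (p - 1) - 1 := by ring
    rw [h1, h2, hstep (p-1) (by omega), hstep p (by omega), hc']; ring
  have hpow1 : ∀ j : ℤ, (-1:ℤ)^j.natAbs * l = 1 ∨ (-1:ℤ)^j.natAbs * l = -1 := by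
    intro j
    rcases Nat.even_or_odd j.natAbs with h | h <;>
      rcases hlc with h2 | h2 <;> rw [h.neg_one_pow, h2] <;> norm_num
  -- membership unfolding
  have hmemG : ∀ i j : ℤ, ((i, j) ∈ GammaD1 n w l ↔
      (i ∈ QzeroD n ∧ j ∈ QzeroD n ∧ i ≤ j ∧ j ≠ -l ∧
        i ≠ (-1:ℤ)^j.natAbs * l ∧ w (|j| + 1) ≤ i)) := by
    intro i j; exact Iff.rfl
  have hmemK : ∀ i j x : ℤ, (kCondD1 n w (i, j) x ↔ ((n:ℤ) ≤ |j| + x ∨ |i| < w (|j| + x + 1))) := by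
    intro i j x; exact Iff.rfl
  have hmemG1 : ∀ i j : ℤ, ((i, j) ∈ GammaOneD1 n w l ↔
      ((i, j) ∈ GammaD1 n w l ∧ kCondD1 n w (i, j) 1)) := by
    intro i j; exact Iff.rfl
  have hmemG2 : ∀ i j : ℤ, ((i, j) ∈ GammaTwoD1 n w l ↔
      ((i, j) ∈ GammaD1 n w l ∧ ¬ kCondD1 n w (i, j) 1 ∧ kCondD1 n w (i, j) 2)) := by
    intro i j; exact Iff.rfl
  -- uniqueness for Gamma1
  have hU1aux : ∀ i j j' : ℤ, (i,j) ∈ GammaOneD1 n w l → (i,j') ∈ GammaD1 n w l → ¬(|j| < |j'|) := by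
    intro i j j' hj hj' hlt
    obtain ⟨hg, hk⟩ := (hmemG1 i j).mp hj
    obtain ⟨_, hQj, _, _, _, hwj⟩ := (hmemG i j).mp hg
    obtain ⟨_, hQj', _, _, _, hwj'⟩ := (hmemG i j').mp hj'
    obtain ⟨hj1, hj2, _⟩ := hQmem _ hQj
    obtain ⟨hj1', hj2', _⟩ := hQmem _ hQj'
    rcases (hmemK i j 1).mp hk with hk | hk
    · omega
    · have h2 : w (|j| + 1 + 1) ≤ w (|j'| + 1) := by
        rcases eq_or_lt_of_le (show |j| + 1 + 1 ≤ |j'| + 1 by omega) with he | hlt2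
        · rw [he]
        · exact le_of_lt (hmono _ _ (by omega) hlt2 (by omega))
      have h3 := le_abs_self i
      omega
  have hU1 : ∀ i j j' : ℤ, (i,j) ∈ GammaOneD1 n w l → (i,j') ∈ GammaOneD1 n w l → j = j' := by
    intro i j j' h1 h2
    have e : |j| = |j'| := by
      rcases lt_trichotomy |j| |j'| with h | h | h
      · exact absurd h (hU1aux i j j' h1 ((hmemG1 i j').mp h2).1)
      · exact h
      · exact absurd h (hU1aux i j' j h2 ((hmemG1 i j).mp h1).1)
    obtain ⟨hg, _⟩ := (hmemG1 i j).mp h1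
    obtain ⟨hg', _⟩ := (hmemG1 i j').mp h2
    obtain ⟨_, hQj, _, hjl, _, _⟩ := (hmemG i j).mp hg
    obtain ⟨_, hQj', _, hjl', _, _⟩ := (hmemG i j').mp hg'
    obtain ⟨hj1, hj2, hj3⟩ := hQmem _ hQj
    obtain ⟨hj1', hj2', hj3'⟩ := hQmem _ hQj'
    rcases hlc with hL | hL <;>
      rcases hj3 with h3 | h3 <;> rcases hj3' with h3' | h3' <;> omega
  -- uniqueness for Gamma2
  have hU2aux : ∀ i j j' : ℤ, (i,j) ∈ GammaTwoD1 n w l → (i,j') ∈ GammaTwoD1 n w l → ¬(|j| < |j'|) := by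
    intro i j j' hj hj' hlt
    obtain ⟨hg, _, hk2⟩ := (hmemG2 i j).mp hj
    obtain ⟨_, hnk1', _⟩ := (hmemG2 i j').mp hj'
    obtain ⟨_, hQj, _, _, _, hwj⟩ := (hmemG i j).mp hg
    obtain ⟨hj1, hj2, _⟩ := hQmem _ hQj
    rw [hmemK] at hnk1'
    push_neg at hnk1'
    obtain ⟨hn1, hn2⟩ := hnk1'
    have hQj' := (hmemG i j').mp (((hmemG2 i j').mp hj').1) |>.2.1
    obtain ⟨hj1', hj2', _⟩ := hQmem _ hQj'
    rcases (hmemK i j 2).mp hk2 with hk | hk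
    · omega
    · have h2 : w (|j| + 2 + 1) ≤ w (|j'| + 1 + 1) := by
        rcases eq_or_lt_of_le (show |j| + 2 + 1 ≤ |j'| + 1 + 1 by omega) with he | hlt2
        · rw [he]
        · exact le_of_lt (hmono _ _ (by omega) hlt2 (by omega))
      omega
  have hU2 : ∀ i j j' : ℤ, (i,j) ∈ GammaTwoD1 n w l → (i,j') ∈ GammaTwoD1 n w l → j = j' := by
    intro i j j' h1 h2
    have e : |j| = |j'| := by
      rcases lt_trichotomy |j| |j'| with h | h | h
      · exact absurd h (hU2aux i j j' h1 h2)
      · exact h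
      · exact absurd h (hU2aux i j' j h2 h1)
    obtain ⟨hg, _⟩ := (hmemG2 i j).mp h1
    obtain ⟨hg', _⟩ := (hmemG2 i j').mp h2
    obtain ⟨_, hQj, _, hjl, _, _⟩ := (hmemG i j).mp hg
    obtain ⟨_, hQj', _, hjl', _, _⟩ := (hmemG i j').mp hg'
    obtain ⟨hj1, hj2, hj3⟩ := hQmem _ hQj
    obtain ⟨hj1', hj2', hj3'⟩ := hQmem _ hQj'
    rcases hlc with hL | hL <;>
      rcases hj3 with h3 | h3 <;> rcases hj3' with h3' | h3' <;> omega
  -- Gamma1 maps into Vp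
  have hMT1 : ∀ i j : ℤ, (i, j) ∈ GammaOneD1 n w l → i ∈ ({c} ∪ Set.Icc 2 (a-1) : Set ℤ) := by
    intro i j hq
    obtain ⟨hg, hk⟩ := (hmemG1 i j).mp hq
    obtain ⟨hQi, hQj, hij, hjl, hpc, hwj⟩ := (hmemG i j).mp hg
    obtain ⟨hj1, hj2, hj3⟩ := hQmem _ hQj
    obtain ⟨hi1, hi2, hi3⟩ := hQmem _ hQi
    rcases le_or_gt 2 i with hi | hi
    · -- 2 ≤ i : show i ≤ a - 1
      right
      rw [Set.mem_Icc]
      refine ⟨hi, ?_⟩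
      by_contra hcon
      have hia : a ≤ i := by omega
      have hiJ : i ≤ |j| := by rcases hj3 with h | h <;> omega
      have hcard := hcount (Finset.Icc 1 (|j| + 1)) (Finset.Icc 1 i) ?_ ?_
      · rw [Int.card_Icc, Int.card_Icc] at hcard
        omega
      · intro x hx
        rw [Finset.mem_Icc] at hx
        constructor <;> omega
      · intro x hx
        rw [Finset.mem_Icc] at hx
        rw [Finset.mem_Icc]
        refine ⟨(hdom' x (by omega) (by omega)).1, ?_⟩
        rcases eq_or_lt_of_le hx.1 with h1 | h1
        · -- x = 1
          rcases hw1 with ⟨_, he⟩ | ⟨_, he⟩ <;> rw [← h1, he] <;>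
            rcases abs_cases (w 1) with ⟨h2, _⟩ | ⟨h2, _⟩ <;> rw [he] at h2 <;> omega
        · -- 2 ≤ x
          have hxle : w x ≤ i := by
            rcases eq_or_lt_of_le hx.2 with h2 | h2
            · rw [h2]; exact hwj
            · exact le_trans (le_of_lt (hmono x (|j|+1) (by omega) (by omega) (by omega))) hwj
          have hxge : b ≤ w x := by
            rcases eq_or_lt_of_le (show (2:ℤ) ≤ x by omega) with h2 | h2
            · rw [← h2, ← hb]
            · rw [hb]; exact le_of_lt (hmono 2 x (by omega) (by omega) (by omega))
          rcases abs_cases (w x) with ⟨h2, _⟩ | ⟨h2, _⟩ <;> omega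
    · -- i = ±1
      left
      have hi4 : i = 1 ∨ i = -1 := by rcases hi3 with h | h <;> omega
      have hiabs : |i| = 1 := by rcases hi4 with h | h <;> subst h <;> norm_num
      -- J + 1 ≤ p
      have hJle : |j| + 1 ≤ p := by
        by_contra hcon
        have := hwpgt (|j| + 1) (by omega) (by omega) (by omega)
        omega
      -- J = p - 1
      have hJp : |j| = p - 1 := by
        rcases (hmemK i j 1).mp hk with h | h
        · omega
        · rcases le_or_gt (|j| + 1 + 1) (n:ℤ) with h5 | h5
          · by_contra hcon
            have := hwple (|j| + 1 + 1) (by omega) h5 (by omega)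
            omega
          · omega
      have := hparodd j hJp
      rw [this] at hpc
      rw [Set.mem_singleton_iff]
      rcases hi4 with h | h <;> rcases hc1 with h2 | h2 <;> omega
  -- Gamma1 surjects onto Vp
  have hSJ1 : ∀ v ∈ ({c} ∪ Set.Icc 2 (a-1) : Set ℤ), ∃ j : ℤ, (v, j) ∈ GammaOneD1 n w l := by
    intro v hv
    rcases hv with hv | hv
    · -- v = c
      rw [Set.mem_singleton_iff] at hv
      rw [hv]
      clear hv
      rcases eq_or_lt_of_le hp2 with hp2' | hp3
      · -- p = 2 : j = l, and l = c
        have hlc2 : c = l := by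
          have hnat : p.natAbs = 2 := by omega
          rw [hc', hnat]; norm_num
        refine ⟨l, (hmemG1 c l).mpr ⟨(hmemG c l).mpr ⟨?_, ?_, ?_, ?_, ?_, ?_⟩, ?_⟩⟩
        · rcases hc1 with h | h <;> rw [h]
          · exact hQmem' 1 (Or.inr ⟨by omega, by omega⟩)
          · exact hQmem' (-1) (Or.inl rfl)
        · rcases hlc with h | h <;> rw [h]
          · exact hQmem' 1 (Or.inr ⟨by omega, by omega⟩)
          · exact hQmem' (-1) (Or.inl rfl)
        · omega
        · rcases hlc with h | h <;> omega
        · rw [hparodd l (by omega)]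
          rcases hc1 with h | h <;> omega
        · rw [(show |l| + 1 = p by omega), hcw]
        · rw [hmemK]
          right
          rw [(show |l| + 1 + 1 = p + 1 by omega)]
          have h2 := hwpgt (p+1) (by omega) (by omega) (by omega)
          rcases hc1 with h | h <;> rw [h] <;> norm_num <;> omega
      · -- p ≥ 3 : j = p - 1
        have habsj' : |(p - 1 : ℤ)| = p - 1 := abs_of_nonneg (by omega)
        refine ⟨p - 1, (hmemG1 c (p-1)).mpr ⟨(hmemG c (p-1)).mpr ⟨?_, ?_, ?_, ?_, ?_, ?_⟩, ?_⟩⟩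
        · rcases hc1 with h | h <;> rw [h]
          · exact hQmem' 1 (Or.inr ⟨by omega, by omega⟩)
          · exact hQmem' (-1) (Or.inl rfl)
        · exact hQmem' (p-1) (Or.inr ⟨by omega, by omega⟩)
        · rcases hc1 with h | h <;> omega
        · rcases hlc with h | h <;> omega
        · rw [hparodd (p-1) habsj']
          rcases hc1 with h | h <;> omega
        · rw [(show |(p-1 : ℤ)| + 1 = p by rw [habsj']; ring), hcw]
        · rw [hmemK]
          rcases eq_or_lt_of_le hpn with h1 | h1
          · left; rw [habsj']; omega
          · right
            rw [(show |(p-1 : ℤ)| + 1 + 1 = p + 1 by rw [habsj']; ring)]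
            have h2 := hwpgt (p+1) (by omega) (by omega) (by omega)
            rcases hc1 with h | h <;> rw [h] <;> norm_num <;> omega
    · -- v in [2, a-1]
      rw [Set.mem_Icc] at hv
      obtain ⟨hv2, hva⟩ := hv
      have hSne : ((Finset.Icc (2:ℤ) (n:ℤ)).filter (fun x => w x ≤ v)).Nonempty := by
        refine ⟨2, ?_⟩
        rw [Finset.mem_filter, Finset.mem_Icc]
        exact ⟨⟨le_refl 2, by omega⟩, by rw [← hb]; omega⟩
      obtain ⟨x₀, hx0mem, hx0max⟩ : ∃ x₀, x₀ ∈ (Finset.Icc (2:ℤ) (n:ℤ)).filter (fun x => w x ≤ v) ∧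
          ∀ y ∈ (Finset.Icc (2:ℤ) (n:ℤ)).filter (fun x => w x ≤ v), y ≤ x₀ :=
        ⟨_, Finset.max'_mem _ hSne, fun y hy => Finset.le_max' _ y hy⟩
      rw [Finset.mem_filter, Finset.mem_Icc] at hx0mem
      obtain ⟨⟨hx01, hx02⟩, hx03⟩ := hx0mem
      have hgt : ∀ y : ℤ, x₀ < y → 2 ≤ y → y ≤ (n:ℤ) → v < w y := by
        intro y h1 h2 h3
        by_contra h4
        have := hx0max y (by rw [Finset.mem_filter, Finset.mem_Icc]; exact ⟨⟨h2, h3⟩, by omega⟩)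
        omega
      have hvx : v + 1 ≤ x₀ := by
        rcases eq_or_lt_of_le hx02 with h1 | h1
        · omega
        · have hTmem : ∀ x ∈ Finset.Icc (x₀+1) (n:ℤ), |w x| ∈ (Finset.Icc (v+1) (n:ℤ)).erase a := by
            intro x hx
            rw [Finset.mem_Icc] at hx
            have h5 : v < w x := hgt x (by omega) (by omega) (by omega)
            have h6 : |w x| = w x := abs_of_nonneg (by omega)
            have h7 := (hdom' x (by omega) (by omega)).2
            rw [Finset.mem_erase, Finset.mem_Icc, h6]
            refine ⟨?_, by omega, by omega⟩
            intro hcon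
            rw [ha] at hcon
            have := w.injective hcon
            rcases hlc with h | h <;> omega
          have hcard := hcount (Finset.Icc (x₀+1) (n:ℤ)) ((Finset.Icc (v+1) (n:ℤ)).erase a)
            (by intro x hx; rw [Finset.mem_Icc] at hx; exact ⟨by omega, hx.2⟩) hTmem
          rw [Int.card_Icc, Finset.card_erase_of_mem (by rw [Finset.mem_Icc]; omega),
            Int.card_Icc] at hcard
          omega
      have habsj : |x₀ - 1| = x₀ - 1 := abs_of_nonneg (by omega)
      refine ⟨x₀ - 1, (hmemG1 v (x₀-1)).mpr ⟨(hmemG v (x₀-1)).mpr ⟨?_, ?_, ?_, ?_, ?_, ?_⟩, ?_⟩⟩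
      · exact hQmem' v (Or.inr ⟨by omega, by omega⟩)
      · exact hQmem' (x₀-1) (Or.inr ⟨by omega, by omega⟩)
      · omega
      · rcases hlc with h | h <;> omega
      · rcases hpow1 (x₀-1) with h | h <;> omega
      · rw [(show |x₀ - 1| + 1 = x₀ by rw [habsj]; ring)]
        exact hx03
      · rw [hmemK]
        rcases eq_or_lt_of_le hx02 with h1 | h1
        · left; rw [habsj]; omega
        · right
          rw [(show |x₀ - 1| + 1 + 1 = x₀ + 1 by rw [habsj]; ring)]
          have h2 := hgt (x₀+1) (by omega) (by omega) (by omega)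
          rw [abs_of_nonneg (by omega : (0:ℤ) ≤ v)]
          omega
  -- Gamma2 maps into Vm
  have hMT2 : ∀ i j : ℤ, (i, j) ∈ GammaTwoD1 n w l →
      b ≤ -2 ∧ (if |i| = 1 then i else -i) ∈ (Set.Icc (b+1) (-2) ∪ {-c} : Set ℤ) := by
    intro i j hq
    obtain ⟨hg, hnk1, hk2⟩ := (hmemG2 i j).mp hq
    obtain ⟨hQi, hQj, hij, hjl, hpc, hwj⟩ := (hmemG i j).mp hg
    obtain ⟨hj1, hj2, hj3⟩ := hQmem _ hQj
    obtain ⟨hi1, hi2, hi3⟩ := hQmem _ hQi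
    rw [hmemK] at hnk1
    push_neg at hnk1
    obtain ⟨hn1, hn2⟩ := hnk1
    rcases le_or_gt 2 i with hi | hi
    · -- 2 ≤ i
      have hiJ : i ≤ |j| := by rcases hj3 with h | h <;> omega
      have habsi : |i| = i := abs_of_nonneg (by omega)
      rw [habsi] at hn2
      have hbi : b ≤ -(i+1) := by
        by_contra hcon
        have hcard := hcount (Finset.Icc 2 (|j| + 1 + 1)) (Finset.Icc 1 i) ?_ ?_
        · rw [Int.card_Icc, Int.card_Icc] at hcard
          omega
        · intro x hx
          rw [Finset.mem_Icc] at hx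
          constructor <;> omega
        · intro x hx
          rw [Finset.mem_Icc] at hx
          rw [Finset.mem_Icc]
          refine ⟨(hdom' x (by omega) (by omega)).1, ?_⟩
          have hxle : w x ≤ i := by
            rcases eq_or_lt_of_le hx.2 with h2 | h2
            · rw [h2]; exact hn2
            · exact le_trans (le_of_lt (hmono x (|j|+1+1) (by omega) (by omega) (by omega))) hn2
          have hxge : b ≤ w x := by
            rcases eq_or_lt_of_le hx.1 with h2 | h2
            · rw [← h2, ← hb]
            · rw [hb]; exact le_of_lt (hmono 2 x (by omega) (by omega) (by omega))
          rcases abs_cases (w x) with ⟨h2, _⟩ | ⟨h2, _⟩ <;> omega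
      refine ⟨by omega, ?_⟩
      rw [if_neg (by omega)]
      left
      rw [Set.mem_Icc]
      omega
    · -- i = ±1
      have hi4 : i = 1 ∨ i = -1 := by rcases hi3 with h | h <;> omega
      have hiabs : |i| = 1 := by rcases hi4 with h | h <;> subst h <;> norm_num
      rw [hiabs] at hn2
      -- |j| + 2 = p
      have hJle : |j| + 2 ≤ p := by
        by_contra hcon
        have := hwpgt (|j| + 1 + 1) (by omega) (by omega) (by omega)
        omega
      have hJp : |j| = p - 2 := by
        rcases (hmemK i j 2).mp hk2 with h | h
        · omega
        · rw [hiabs] at h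
          rcases le_or_gt (|j| + 2 + 1) (n:ℤ) with h5 | h5
          · by_contra hcon
            have := hwple (|j| + 2 + 1) (by omega) h5 (by omega)
            omega
          · omega
      have hp3 : 3 ≤ p := by omega
      have hpareq := hpareven j hJp
      rw [hpareq] at hpc
      refine ⟨hbp3.mpr hp3, ?_⟩
      rw [if_pos hiabs]
      right
      rw [Set.mem_singleton_iff]
      rcases hi4 with h | h <;> rcases hc1 with h2 | h2 <;> omega
  -- Gamma2 surjects onto Vm
  have hSJ2 : ∀ v : ℤ, b ≤ -2 → v ∈ (Set.Icc (b+1) (-2) ∪ {-c} : Set ℤ) →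
      ∃ i j : ℤ, (i, j) ∈ GammaTwoD1 n w l ∧ (if |i| = 1 then i else -i) = v := by
    intro v hB hv
    have hp3 : 3 ≤ p := hbp3.mp hB
    have hbn : -b < a := by omega
    rcases hv with hv | hv
    · -- v in [b+1, -2] : i = -v
      rw [Set.mem_Icc] at hv
      obtain ⟨hv1, hv2⟩ := hv
      have hi2 : 2 ≤ -v := by omega
      have hSne : ((Finset.Icc (2:ℤ) (n:ℤ)).filter (fun x => w x ≤ -v)).Nonempty := by
        refine ⟨3, ?_⟩
        rw [Finset.mem_filter, Finset.mem_Icc]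
        refine ⟨⟨by omega, by omega⟩, ?_⟩
        have := hwple 3 (by omega) (by omega) (by omega)
        omega
      obtain ⟨x₀, hx0mem, hx0max⟩ : ∃ x₀, x₀ ∈ (Finset.Icc (2:ℤ) (n:ℤ)).filter (fun x => w x ≤ -v) ∧
          ∀ y ∈ (Finset.Icc (2:ℤ) (n:ℤ)).filter (fun x => w x ≤ -v), y ≤ x₀ :=
        ⟨_, Finset.max'_mem _ hSne, fun y hy => Finset.le_max' _ y hy⟩
      rw [Finset.mem_filter, Finset.mem_Icc] at hx0mem
      obtain ⟨⟨hx01, hx02⟩, hx03⟩ := hx0mem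
      have hx3 : 3 ≤ x₀ := by
        apply hx0max 3
        rw [Finset.mem_filter, Finset.mem_Icc]
        refine ⟨⟨by omega, by omega⟩, ?_⟩
        have := hwple 3 (by omega) (by omega) (by omega)
        omega
      have hgt : ∀ y : ℤ, x₀ < y → 2 ≤ y → y ≤ (n:ℤ) → -v < w y := by
        intro y h1 h2 h3
        by_contra h4
        have := hx0max y (by rw [Finset.mem_filter, Finset.mem_Icc]; exact ⟨⟨h2, h3⟩, by omega⟩)
        omega
      have hvx : -v + 2 ≤ x₀ := by
        rcases eq_or_lt_of_le hx02 with h1 | h1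
        · omega
        · have hTmem : ∀ x ∈ Finset.Icc (x₀+1) (n:ℤ),
              |w x| ∈ ((Finset.Icc (-v+1) (n:ℤ)).erase a).erase (-b) := by
            intro x hx
            rw [Finset.mem_Icc] at hx
            have h5 : -v < w x := hgt x (by omega) (by omega) (by omega)
            have h6 : |w x| = w x := abs_of_nonneg (by omega)
            have h7 := (hdom' x (by omega) (by omega)).2
            rw [Finset.mem_erase, Finset.mem_erase, Finset.mem_Icc, h6]
            refine ⟨?_, ?_, by omega, by omega⟩
            · intro hcon
              have h8 : |w x| = |w 2| := by
                rw [h6, hcon, ← hb, abs_of_nonpos (by omega)]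
              have := habs x 2 (by omega) (by omega) (by omega) (by omega) h8
              omega
            · intro hcon
              rw [ha] at hcon
              have := w.injective hcon
              rcases hlc with h | h <;> omega
          have hcard := hcount (Finset.Icc (x₀+1) (n:ℤ)) (((Finset.Icc (-v+1) (n:ℤ)).erase a).erase (-b))
            (by intro x hx; rw [Finset.mem_Icc] at hx; exact ⟨by omega, hx.2⟩) hTmem
          have hcA : ((Finset.Icc (-v+1) (n:ℤ)).erase a).card
              = (Finset.Icc (-v+1) (n:ℤ)).card - 1 :=
            Finset.card_erase_of_mem (by rw [Finset.mem_Icc]; omega)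
          have hcB : (((Finset.Icc (-v+1) (n:ℤ)).erase a).erase (-b)).card
              = ((Finset.Icc (-v+1) (n:ℤ)).erase a).card - 1 :=
            Finset.card_erase_of_mem
              (by rw [Finset.mem_erase, Finset.mem_Icc]; exact ⟨by omega, by omega, by omega⟩)
          rw [hcB, hcA, Int.card_Icc, Int.card_Icc] at hcard
          omega
      have habsj : |x₀ - 2| = x₀ - 2 := abs_of_nonneg (by omega)
      refine ⟨-v, x₀ - 2, (hmemG2 (-v) (x₀-2)).mpr ⟨(hmemG (-v) (x₀-2)).mpr
        ⟨?_, ?_, ?_, ?_, ?_, ?_⟩, ?_, ?_⟩, ?_⟩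
      · exact hQmem' (-v) (Or.inr ⟨by omega, by omega⟩)
      · exact hQmem' (x₀-2) (Or.inr ⟨by omega, by omega⟩)
      · omega
      · rcases hlc with h | h <;> omega
      · rcases hpow1 (x₀-2) with h | h <;> omega
      · rw [(show |x₀ - 2| + 1 = x₀ - 1 by rw [habsj]; ring)]
        have h9 : w (x₀ - 1) < w x₀ := hmono (x₀ - 1) x₀ (by omega) (by omega) (by omega)
        omega
      · rw [hmemK]
        push_neg
        constructor
        · omega
        · rw [(show |x₀ - 2| + 1 + 1 = x₀ by rw [habsj]; ring),
            abs_of_nonneg (by omega : (0:ℤ) ≤ -v)]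
          exact hx03
      · rw [hmemK]
        rcases eq_or_lt_of_le hx02 with h1 | h1
        · left; rw [habsj]; omega
        · right
          rw [(show |x₀ - 2| + 2 + 1 = x₀ + 1 by rw [habsj]; ring),
            abs_of_nonneg (by omega : (0:ℤ) ≤ -v)]
          exact hgt (x₀+1) (by omega) (by omega) (by omega)
      · rw [if_neg (by rw [abs_of_nonneg (by omega : (0:ℤ) ≤ -v)]; omega)]
        omega
    · -- v = -c : i = -c, j = if p = 3 then l else p - 2
      rw [Set.mem_singleton_iff] at hv
      have habsc : |(-c)| = 1 := by rcases hc1 with h | h <;> rw [h] <;> norm_num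
      have hwp1 : w (p - 1) ≤ -1 := by
        have h1 : w (p-1) < w p := hmono (p-1) p (by omega) (by omega) (by omega)
        have h2 := hwnz (p-1) (by omega) (by omega)
        have h3 := (hdom' (p-1) (by omega) (by omega)).1
        have h4 : w (p-1) ≠ -1 ∧ w (p-1) ≠ 1 := by
          constructor <;> intro hcon <;>
          · have h5 : |w (p-1)| = |w p| := by
              rcases hwp with h6 | h6 <;> rw [h6, hcon] <;> norm_num
            have := habs (p-1) p (by omega) (by omega) (by omega) (by omega) h5
            omega
        rcases hwp with h6 | h6 <;> rcases abs_cases (w (p-1)) with ⟨h7, _⟩ | ⟨h7, _⟩ <;> omega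
      rcases eq_or_lt_of_le hp3 with hp3' | hp4
      · -- p = 3 : j = l, l = -c
        have hcl : c = -l := by
          have hnat : p.natAbs = 3 := by omega
          rw [hc', hnat]; norm_num
        refine ⟨-c, l, (hmemG2 (-c) l).mpr ⟨(hmemG (-c) l).mpr
          ⟨?_, ?_, ?_, ?_, ?_, ?_⟩, ?_, ?_⟩, ?_⟩
        · rcases hc1 with h | h <;> rw [h]
          · exact hQmem' (-(1:ℤ)) (by norm_num)
          · exact hQmem' (-(-1:ℤ)) (by norm_num; omega)
        · rcases hlc with h | h <;> rw [h]
          · exact hQmem' 1 (Or.inr ⟨by omega, by omega⟩)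
          · exact hQmem' (-1) (Or.inl rfl)
        · omega
        · rcases hlc with h | h <;> omega
        · rw [hpareven l (by omega)]
          rcases hc1 with h | h <;> omega
        · rw [(show |l| + 1 = p - 1 by omega)]
          rcases hc1 with h | h <;> omega
        · rw [hmemK]
          push_neg
          rw [habsc, (show |l| + 1 + 1 = p by omega), hcw]
          exact ⟨by omega, by rcases hc1 with h | h <;> omega⟩
        · rw [hmemK, habsc, (show |l| + 2 + 1 = p + 1 by omega)]
          rcases eq_or_lt_of_le hpn with h1 | h1
          · left; omega
          · right
            have := hwpgt (p+1) (by omega) (by omega) (by omega)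
            omega
        · rw [if_pos habsc]; omega
      · -- p ≥ 4 : j = p - 2
        have habsj : |p - 2| = p - 2 := abs_of_nonneg (by omega)
        refine ⟨-c, p - 2, (hmemG2 (-c) (p-2)).mpr ⟨(hmemG (-c) (p-2)).mpr
          ⟨?_, ?_, ?_, ?_, ?_, ?_⟩, ?_, ?_⟩, ?_⟩
        · rcases hc1 with h | h <;> rw [h]
          · exact hQmem' (-(1:ℤ)) (by norm_num)
          · exact hQmem' (-(-1:ℤ)) (by norm_num; omega)
        · exact hQmem' (p-2) (Or.inr ⟨by omega, by omega⟩)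
        · rcases hc1 with h | h <;> omega
        · rcases hlc with h | h <;> omega
        · rw [hpareven (p-2) habsj]
          rcases hc1 with h | h <;> omega
        · rw [(show |p - 2| + 1 = p - 1 by rw [habsj]; ring)]
          rcases hc1 with h | h <;> omega
        · rw [hmemK]
          push_neg
          rw [habsc, (show |p - 2| + 1 + 1 = p by rw [habsj]; ring), hcw]
          exact ⟨by omega, by rcases hc1 with h | h <;> omega⟩
        · rw [hmemK, habsc, (show |p - 2| + 2 + 1 = p + 1 by rw [habsj]; ring)]
          rcases eq_or_lt_of_le hpn with h1 | h1
          · left; rw [habsj]; omega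
          · right
            have := hwpgt (p+1) (by omega) (by omega) (by omega)
            omega
        · rw [if_pos habsc]; omega
  -- assemble
  constructor
  · refine ⟨?_, ?_, ?_⟩
    · intro q hq
      rw [hVp]
      exact hMT1 q.1 q.2 (by rw [Prod.mk.eta]; exact hq)
    · intro q hq r hr he
      have h2 : (q.1, r.2) ∈ GammaOneD1 n w l := by rw [he, Prod.mk.eta]; exact hr
      have h3 := hU1 q.1 q.2 r.2 (by rw [Prod.mk.eta]; exact hq) h2
      exact Prod.ext he h3
    · intro v hv
      rw [hVp] at hv
      obtain ⟨j, hj⟩ := hSJ1 v hv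
      exact ⟨(v, j), hj, rfl⟩
  · have hfinj : ∀ i i' : ℤ, i ∈ QzeroD n → i' ∈ QzeroD n →
        (if |i| = 1 then i else -i) = (if |i'| = 1 then i' else -i') → i = i' := by
      intro i i' h h' he
      obtain ⟨h1, h2, h3⟩ := hQmem _ h
      obtain ⟨h1', h2', h3'⟩ := hQmem _ h'
      by_cases e1 : |i| = 1 <;> by_cases e2 : |i'| = 1
      · rw [if_pos e1, if_pos e2] at he; exact he
      · rw [if_pos e1, if_neg e2] at he
        rcases h3 with ⟨h4, h5⟩ | h4 <;> rcases h3' with ⟨h4', h5'⟩ | h4' <;> omega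
      · rw [if_neg e1, if_pos e2] at he
        rcases h3 with ⟨h4, h5⟩ | h4 <;> rcases h3' with ⟨h4', h5'⟩ | h4' <;> omega
      · rw [if_neg e1, if_neg e2] at he
        rcases h3 with ⟨h4, h5⟩ | h4 <;> rcases h3' with ⟨h4', h5'⟩ | h4' <;> omega
    refine ⟨?_, ?_, ?_⟩
    · intro q hq
      have h1 := hMT2 q.1 q.2 (by rw [Prod.mk.eta]; exact hq)
      show (if |q.1| = 1 then q.1 else -q.1) ∈ Vm
      rw [hVm, if_pos h1.1]
      exact h1.2
    · intro q hq r hr he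
      have hq' : (q.1, q.2) ∈ GammaTwoD1 n w l := by rw [Prod.mk.eta]; exact hq
      have hr' : (r.1, r.2) ∈ GammaTwoD1 n w l := by rw [Prod.mk.eta]; exact hr
      have hQq := ((hmemG q.1 q.2).mp ((hmemG2 q.1 q.2).mp hq').1).1
      have hQr := ((hmemG r.1 r.2).mp ((hmemG2 r.1 r.2).mp hr').1).1
      have he' : (if |q.1| = 1 then q.1 else -q.1) = (if |r.1| = 1 then r.1 else -r.1) := he
      have h1 : q.1 = r.1 := hfinj q.1 r.1 hQq hQr he'
      have h2 : (q.1, r.2) ∈ GammaTwoD1 n w l := by rw [h1, Prod.mk.eta]; exact hr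
      have h3 := hU2 q.1 q.2 r.2 hq' h2
      exact Prod.ext h1 h3
    · intro v hv
      rw [hVm] at hv
      by_cases hB : b ≤ -2
      · rw [if_pos hB] at hv
        obtain ⟨i, j, hmem, hfe⟩ := hSJ2 v hB hv
        exact ⟨(i, j), hmem, hfe⟩
      · rw [if_neg hB] at hv
        exact absurd hv (Set.notMem_empty v)
end

section
/- Let w ∈ W(D_n) have exactly one descent, at l with l ≥ 2. Set a = w(l), b = w(l+1), R = w({l+1,…,n}), r = max{k ≥ 0 : {1,…,k} ⊆ R ∪ (−R)}, and c = w⁻¹(|w(1)|) (equivalently, c = 1 if w(1) > 0 and c = −1 if w(1) < 0) if r ≥ 1, and c = 1 if r = 0. Put V = {b,…,a−1} if b ≥ 2; V = {c} ∪ {2,…,a−1} if b ∈ {1,−1}; and V = ({b+1,…,−2} ∪ {−c}) ∪ ({c} ∪ {2,…,a−1}) if b ≤ −2; here all interval notations exclude 0. Define Γ(w) = {(i,j) : l ≤ j ≤ n−1, i a nonzero integer with j−(n−1)−l ≤ i ≤ j and |i| ≤ n−1, such that: i ≥ w(j+1) if w(j+1) ≥ 2; (i ≥ 2 or i = w(j+1))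 if w(j+1) ∈ {1,−1}; i ≥ w(j+1)+1 if w(j+1) ≤ −2}. Let Γ₁(w) = {(i,j) ∈ Γ(w) : (i, j+1) ∉ Γ(w)} (pairs with second coordinate ≥ n are never in Γ(w)) and Λ₁(w) = {(i,j) ∈ Γ₁(w) : i ≤ a−1}. Then the map (i,j) ↦ i is a bijection from Λ₁(w) onto V. -/
/-- `Γ(w)` for `w ∈ W(D_n)` with unique descent `l ≥ 2`: the set of pairs `(i,j)` with
`l ≤ j ≤ n−1`, `i` a nonzero integer with `j−(n−1)−l ≤ i ≤ j` and `|i| ≤ n−1`, such that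
`i ≥ w(j+1)` if `w(j+1) ≥ 2`; (`i ≥ 2` or `i = w(j+1)`) if `w(j+1) ∈ {1,−1}`; and
`i ≥ w(j+1)+1` if `w(j+1) ≤ −2`. -/
def GammaD2 (n : ℕ) (w : Equiv.Perm ℤ) (l : ℤ) : Set (ℤ × ℤ) :=
  {p | l ≤ p.2 ∧ p.2 ≤ (n : ℤ) - 1 ∧ p.1 ≠ 0 ∧
    p.2 - ((n : ℤ) - 1) - l ≤ p.1 ∧ p.1 ≤ p.2 ∧ |p.1| ≤ (n : ℤ) - 1 ∧
    ((2 ≤ w (p.2 + 1) ∧ w (p.2 + 1) ≤ p.1) ∨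
      ((w (p.2 + 1) = 1 ∨ w (p.2 + 1) = -1) ∧ (2 ≤ p.1 ∨ p.1 = w (p.2 + 1))) ∨
      (w (p.2 + 1) ≤ -2 ∧ w (p.2 + 1) + 1 ≤ p.1))}

/-- `Γ₁(w) = {(i,j) ∈ Γ(w) : (i, j+1) ∉ Γ(w)}`. -/
def GammaOneD2 (n : ℕ) (w : Equiv.Perm ℤ) (l : ℤ) : Set (ℤ × ℤ) :=
  {p ∈ GammaD2 n w l | (p.1, p.2 + 1) ∉ GammaD2 n w l}

/-- `Λ₁(w) = {(i,j) ∈ Γ₁(w) : i ≤ a−1}`, where `a = w(l)`. -/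
def LambdaOneD2 (n : ℕ) (w : Equiv.Perm ℤ) (l : ℤ) : Set (ℤ × ℤ) :=
  {p ∈ GammaOneD2 n w l | p.1 ≤ w l - 1}

/-- Auxiliary predicate: the "lower bound" clause appearing in `GammaD2`. -/
def SP (v i : ℤ) : Prop :=
  (2 ≤ v ∧ v ≤ i) ∨ ((v = 1 ∨ v = -1) ∧ (2 ≤ i ∨ i = v)) ∨ (v ≤ -2 ∧ v + 1 ≤ i)

theorem SP_def (v i : ℤ) : SP v i ↔
    ((2 ≤ v ∧ v ≤ i) ∨ ((v = 1 ∨ v = -1) ∧ (2 ≤ i ∨ i = v)) ∨ (v ≤ -2 ∧ v + 1 ≤ i)) :=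
  Iff.rfl

theorem SP_mono {v v' i : ℤ} (h1 : v < v') (h2 : v ≠ 0) (h3 : ¬(v = -1 ∧ v' = 1))
    (h4 : SP v' i) : SP v i := by
  simp only [SP_def] at h4 ⊢; omega

/-- Let `w ∈ W(D_n)` have exactly one descent, at `l ≥ 2`.  With `a = w(l)`, `b = w(l+1)`,
`R = w({l+1,…,n})`, `r = max{k ≥ 0 : {1,…,k} ⊆ R ∪ (−R)}`, `c = w⁻¹(|w(1)|)` if `r ≥ 1` and
`c = 1` if `r = 0`, and `V = {b,…,a−1}` if `b ≥ 2`, `V = {c} ∪ {2,…,a−1}` if `b ∈ {1,−1}`,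
`V = ({b+1,…,−2} ∪ {−c}) ∪ ({c} ∪ {2,…,a−1})` if `b ≤ −2`, the map `(i,j) ↦ i` is a
bijection from `Λ₁(w)` onto `V`. -/
theorem lambdaOne_bijOn_D_typeGE2 (n : ℕ) (hn : 4 ≤ n)
    (w : Equiv.Perm ℤ) (hw : IsDPerm n w)
    (l : ℤ) (hl : IsDescentD n w l) (hl' : ∀ l', IsDescentD n w l' → l' = l)
    (hl2 : 2 ≤ l)
    (a b : ℤ) (ha : a = w l) (hb : b = w (l + 1))
    (R : Set ℤ) (hR : R = ⇑w '' Set.Icc (l + 1) (n : ℤ))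
    (r : ℤ) (hr0 : 0 ≤ r) (hr1 : ∀ k : ℤ, 1 ≤ k → k ≤ r → (k ∈ R ∨ -k ∈ R))
    (hr2 : ¬(r + 1 ∈ R ∨ -(r + 1) ∈ R))
    (c : ℤ) (hc : c = if 1 ≤ r then w.symm |w 1| else 1)
    (V : Set ℤ)
    (hV : V = if 2 ≤ b then Set.Icc b (a - 1)
      else if b = 1 ∨ b = -1 then {c} ∪ Set.Icc 2 (a - 1)
      else (Set.Icc (b + 1) (-2) ∪ {-c}) ∪ ({c} ∪ Set.Icc 2 (a - 1))) :
    Set.BijOn Prod.fst (LambdaOneD2 n w l) V := by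
  classical
  obtain ⟨hfix, hodd, heven⟩ := hw
  obtain ⟨hl1, hlD⟩ := hl
  have hn' : (4:ℤ) ≤ (n:ℤ) := by exact_mod_cast hn
  have hlN : l ≤ (n:ℤ) - 1 := by rcases hl1 with h | ⟨h1, h2⟩ <;> omega
  -- membership characterizations
  have hΓ : ∀ i j : ℤ, ((i, j) ∈ GammaD2 n w l) ↔
      (l ≤ j ∧ j ≤ (n:ℤ) - 1 ∧ i ≠ 0 ∧ j - ((n:ℤ) - 1) - l ≤ i ∧ i ≤ j ∧
        |i| ≤ (n:ℤ) - 1 ∧ SP (w (j + 1)) i) := fun i j => Iff.rfl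
  have hΛ : ∀ i j : ℤ, ((i, j) ∈ LambdaOneD2 n w l) ↔
      (((i, j) ∈ GammaD2 n w l ∧ ((i, j + 1) ∉ GammaD2 n w l)) ∧ i ≤ w l - 1) :=
    fun i j => Iff.rfl
  -- the shell {±1,…,±n} is preserved
  have hstay : ∀ k : ℤ, (1 ≤ |k| ∧ |k| ≤ (n:ℤ)) → (1 ≤ |w k| ∧ |w k| ≤ (n:ℤ)) := by
    intro k hk
    by_contra hcon
    have h2' := hfix (w k) hcon
    have h3' : w k = k := w.injective h2'
    rw [h3'] at hcon; exact hcon hk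
  have hshell : ∀ k : ℤ, 1 ≤ k → k ≤ (n:ℤ) → (-(n:ℤ) ≤ w k ∧ w k ≤ (n:ℤ) ∧ w k ≠ 0) := by
    intro k h1 h2
    have hk : |k| = k := abs_of_pos (by omega)
    obtain ⟨u1, u2⟩ := hstay k ⟨by rw [hk]; omega, by rw [hk]; omega⟩
    rcases abs_cases (w k) with ⟨he, hs⟩ | ⟨he, hs⟩ <;> rw [he] at u1 u2 <;>
      exact ⟨by omega, by omega, by omega⟩
  -- strict ascent away from the descent position
  have hstep : ∀ k : ℤ, 1 ≤ k → k ≤ (n:ℤ) - 1 → k ≠ l → w k < w (k + 1) := by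
    intro k h1 h2 h3
    by_contra hcon
    push_neg at hcon
    rcases eq_or_lt_of_le hcon with heq | hlt
    · have := w.injective heq; omega
    · have hd : IsDescentD n w k :=
        ⟨Or.inr ⟨h1, h2⟩, by rw [abs_of_pos (by omega : (0:ℤ) < k)]; exact hlt⟩
      exact h3 (hl' k hd)
  -- no descent at -1
  have hneg1 : -(w 1) < w 2 := by
    by_contra hcon
    push_neg at hcon
    have he : w (-1) = -(w 1) := hodd 1
    rcases eq_or_lt_of_le hcon with heq | hlt
    · have : w 2 = w (-1) := by omega
      have := w.injective this; omega
    · have hd : IsDescentD n w (-1) :=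
        ⟨Or.inl rfl, by rw [show |(-1:ℤ)| + 1 = 2 by norm_num]; omega⟩
      have := hl' (-1) hd; omega
  have h1s := hshell 1 (by omega) (by omega)
  have h2w2 : 2 ≤ w 2 := by
    have := hstep 1 (by omega) (by omega) (by omega)
    rw [show (1:ℤ) + 1 = 2 by norm_num] at this
    omega
  have hmono1 : ∀ s t : ℤ, 1 ≤ s → s ≤ t → t ≤ l → w s ≤ w t := by
    intro s t hs hst
    have H : ∀ t' : ℤ, s ≤ t' → (t' ≤ l → w s ≤ w t') := by
      refine Int.le_induction ?_ ?_
      · intro _; exact le_refl _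
      · intro k hk IH hk1
        have h5 := hstep k (by omega) (by omega) (by omega)
        have h6 := IH (by omega)
        omega
    exact H t hst
  have hgap : ∀ s t : ℤ, l + 1 ≤ s → s ≤ t → t ≤ (n:ℤ) → w s + (t - s) ≤ w t := by
    intro s t hs hst
    have H : ∀ t' : ℤ, s ≤ t' → (t' ≤ (n:ℤ) → w s + (t' - s) ≤ w t') := by
      refine Int.le_induction ?_ ?_
      · intro _; omega
      · intro k hk IH hk1
        have h5 := hstep k (by omega) (by omega) (by omega)
        have h6 := IH (by omega)
        omega
    exact H t hst
  have hwl := hshell l (by omega) (by omega)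
  have ha2 : 2 ≤ a := by
    have := hmono1 2 l (by omega) hl2 (le_refl l)
    omega
  have han : a ≤ (n:ℤ) := by omega
  -- chain of SP implications along the increasing tail
  have chain : ∀ (i m m' : ℤ), l ≤ m → m ≤ m' → m' ≤ (n:ℤ) - 1 →
      SP (w (m' + 1)) i → SP (w (m + 1)) i := by
    intro i m m' hm hmm'
    have H : ∀ m'' : ℤ, m ≤ m'' → (m'' ≤ (n:ℤ) - 1 → SP (w (m'' + 1)) i → SP (w (m + 1)) i) := by
      refine Int.le_induction ?_ ?_
      · exact fun _ h => h
      · intro k hk IH hk1 hsp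
        apply IH (by omega)
        refine SP_mono ?_ ?_ ?_ hsp
        · exact hstep (k + 1) (by omega) (by omega) (by omega)
        · exact (hshell (k + 1) (by omega) (by omega)).2.2
        · rintro ⟨e1, e2⟩
          have h' : w (-(k + 1)) = w (k + 1 + 1) := by
            rw [hodd (k + 1), e1, e2]; norm_num
          have := w.injective h'; omega
    exact fun h1 h2 => H m' hmm' h1 h2
  -- key: for p ∈ Γ with (p.1,p.2+1) ∉ Γ and p.2 < n-1, SP fails at the next level
  have hkey : ∀ i j : ℤ, (i, j) ∈ GammaD2 n w l → (i, j + 1) ∉ GammaD2 n w l →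
      j ≤ (n:ℤ) - 2 → ¬ SP (w (j + 2)) i := by
    intro i j hmem hnot hj hsp
    obtain ⟨hj1, hj2, hi0, hlow, hij, habsi, hspj⟩ := (hΓ i j).mp hmem
    apply hnot
    have hlow' : j + 1 - ((n:ℤ) - 1) - l ≤ i := by
      by_contra hq
      push_neg at hq
      have hieq : i = j - ((n:ℤ) - 1) - l := by omega
      have hi3 : i ≤ -3 := by omega
      have h1 : w (j + 1) ≤ i - 1 := by simp only [SP_def] at hspj; omega
      have h2 := hgap (l + 1) (j + 1) (le_refl _) (by omega) (by omega)
      have h3 : -(n:ℤ) ≤ w (l + 1) := (hshell (l + 1) (by omega) (by omega)).1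
      have h4 : w (j + 2) ≤ i - 1 := by simp only [SP_def] at hsp; omega
      have h5 := hstep (j + 1) (by omega) (by omega) (by omega)
      rw [show j + 1 + 1 = j + 2 by ring] at h5
      omega
    refine (hΓ i (j + 1)).mpr ⟨by omega, by omega, hi0, hlow', by omega, habsi, ?_⟩
    rw [show j + 1 + 1 = j + 2 by ring]; exact hsp
  -- counting argument
  have hcount : ∀ i j : ℤ, 1 ≤ i → l ≤ j → j ≤ (n:ℤ) - 2 → i < w (j + 2) → i ≤ a - 1 →
      i ≤ j := by
    intro i j h1 h2 h3 h4 h5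
    by_contra hcon
    push_neg at hcon
    have hsub : ∀ k ∈ insert l (Finset.Icc (j + 2) (n:ℤ)), w k ∈ Finset.Icc (i + 1) (n:ℤ) := by
      intro k hk
      rcases Finset.mem_insert.mp hk with rfl | hk'
      · exact Finset.mem_Icc.mpr ⟨by omega, by omega⟩
      · obtain ⟨hk1, hk2⟩ := Finset.mem_Icc.mp hk'
        have hg := hgap (j + 2) k (by omega) hk1 hk2
        have hs := hshell k (by omega) hk2
        exact Finset.mem_Icc.mpr ⟨by omega, by omega⟩
    have hcard := Finset.card_le_card_of_injOn (fun k => w k) hsub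
      (fun x _ y _ hxy => w.injective hxy)
    rw [Finset.card_insert_of_notMem (by simp only [Finset.mem_Icc]; omega)] at hcard
    rw [Int.card_Icc, Int.card_Icc] at hcard
    omega
  -- b is a member of R
  have hbR : b ∈ R := by
    rw [hR, hb]
    exact ⟨l + 1, Set.mem_Icc.mpr ⟨le_refl _, by omega⟩, rfl⟩
  -- c is ±1
  have hcpm : c = 1 ∨ c = -1 := by
    rw [hc]
    split_ifs with hr'
    · rcases lt_or_gt_of_ne h1s.2.2 with hneg | hpos
      · right; rw [abs_of_neg hneg, ← hodd 1]; exact w.symm_apply_apply (-1)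
      · left; rw [abs_of_pos hpos]; exact w.symm_apply_apply 1
    · left; rfl
  -- when b = ±1, c = b
  have hw1sign : (b = 1 ∨ b = -1) → c = b := by
    intro hbpm
    have hwl1 : w (l + 1) = b := hb.symm
    have hr1' : 1 ≤ r := by
      by_contra hcon
      push_neg at hcon
      have hrz : r = 0 := by omega
      apply hr2
      rcases hbpm with hbc | hbc
      · left; rw [hrz, show (0:ℤ) + 1 = 1 by norm_num]
        have : (1:ℤ) ∈ R := by rw [← hbc]; exact hbR
        exact this
      · right; rw [hrz, show -((0:ℤ) + 1) = -1 by norm_num]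
        have : (-1:ℤ) ∈ R := by rw [← hbc]; exact hbR
        exact this
    rcases hbpm with hbc | hbc
    · have hpos : 0 < w 1 := by
        by_contra hcon
        push_neg at hcon
        have hfil : (Finset.Icc (1:ℤ) (n:ℤ)).filter (fun i => w i < 0) = {1} := by
          ext k
          simp only [Finset.mem_filter, Finset.mem_Icc, Finset.mem_singleton]
          constructor
          · rintro ⟨⟨hk1, hk2⟩, hkneg⟩
            by_contra hk3
            rcases le_or_gt k l with hkl | hkl
            · have := hmono1 2 k (by omega) (by omega) hkl
              omega
            · have := hgap (l + 1) k (le_refl _) (by omega) (by omega)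
              omega
          · rintro rfl
            exact ⟨⟨le_refl _, by omega⟩, by omega⟩
        rw [hfil, Finset.card_singleton] at heven
        exact Nat.not_even_one heven
      rw [hc, if_pos hr1', abs_of_pos hpos, Equiv.symm_apply_apply]
      exact hbc.symm
    · have hneg : w 1 < 0 := by
        by_contra hcon
        push_neg at hcon
        have hfil : (Finset.Icc (1:ℤ) (n:ℤ)).filter (fun i => w i < 0) = {l + 1} := by
          ext k
          simp only [Finset.mem_filter, Finset.mem_Icc, Finset.mem_singleton]
          constructor
          · rintro ⟨⟨hk1, hk2⟩, hkneg⟩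
            by_contra hk3
            rcases le_or_gt k l with hkl | hkl
            · rcases eq_or_lt_of_le hk1 with h1k | h1k
              · have hk1' : k = 1 := h1k.symm
                rw [hk1'] at hkneg; omega
              · have := hmono1 2 k (by omega) (by omega) hkl
                omega
            · have := hgap (l + 1) k (le_refl _) (by omega) (by omega)
              have hs := hshell k (by omega) (by omega)
              omega
          · rintro rfl
            exact ⟨⟨by omega, by omega⟩, by omega⟩
        rw [hfil, Finset.card_singleton] at heven
        exact Nat.not_even_one heven
      rw [hc, if_pos hr1', abs_of_neg hneg, ← hodd 1, Equiv.symm_apply_apply]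
      exact hbc.symm
  -- characterization of V
  have hVchar : ∀ i : ℤ, i ∈ V ↔ (SP b i ∧ i ≠ 0 ∧ i ≤ a - 1) := by
    intro i
    rw [hV]
    split_ifs with hb2 hb1
    · simp only [Set.mem_Icc, SP_def]; omega
    · have hcb : c = b := hw1sign hb1
      simp only [Set.mem_union, Set.mem_singleton_iff, Set.mem_Icc, SP_def]
      omega
    · push_neg at hb1
      have hls := hshell (l + 1) (by omega) (by omega)
      have hbl : b ≤ -2 := by omega
      simp only [Set.mem_union, Set.mem_singleton_iff, Set.mem_Icc, SP_def]
      omega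
  refine ⟨?_, ?_, ?_⟩
  · -- MapsTo
    intro p hp
    obtain ⟨⟨hpΓ, _⟩, hpa⟩ := (hΛ p.1 p.2).mp hp
    obtain ⟨hj1, hj2, hi0, _, _, _, hsp⟩ := (hΓ p.1 p.2).mp hpΓ
    have hSPb : SP b p.1 := by
      rw [hb]; exact chain p.1 l p.2 (le_refl l) hj1 hj2 hsp
    exact (hVchar p.1).mpr ⟨hSPb, hi0, by omega⟩
  · -- InjOn
    have hasym : ∀ p q : ℤ × ℤ, p ∈ LambdaOneD2 n w l → q ∈ LambdaOneD2 n w l →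
        p.1 = q.1 → p.2 < q.2 → False := by
      intro p q hp hq h12 hlt
      obtain ⟨⟨hpΓ, hpn⟩, _⟩ := (hΛ p.1 p.2).mp hp
      obtain ⟨⟨hqΓ, _⟩, _⟩ := (hΛ q.1 q.2).mp hq
      obtain ⟨hpj1, hpj2, _, _, _, _, _⟩ := (hΓ p.1 p.2).mp hpΓ
      obtain ⟨hqj1, hqj2, _, _, _, _, hqsp⟩ := (hΓ q.1 q.2).mp hqΓ
      have hch := chain q.1 (p.2 + 1) q.2 (by omega) (by omega) hqj2 hqsp
      rw [show p.2 + 1 + 1 = p.2 + 2 by ring] at hch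
      rw [← h12] at hch
      exact hkey p.1 p.2 hpΓ hpn (by omega) hch
    intro p hp q hq h
    rcases lt_trichotomy p.2 q.2 with h' | h' | h'
    · exact absurd (hasym p q hp hq h h') (by simp)
    · exact Prod.ext h h'
    · exact absurd (hasym q p hq hp h.symm h') (by simp)
  · -- SurjOn
    intro i hi
    obtain ⟨hSPb, hi0, hia⟩ := (hVchar i).mp hi
    obtain ⟨j, hjmem, hjmax⟩ :
        ∃ j ∈ Finset.filter (fun j => SP (w (j + 1)) i) (Finset.Icc l ((n:ℤ) - 1)),
          ∀ k ∈ Finset.filter (fun j => SP (w (j + 1)) i) (Finset.Icc l ((n:ℤ) - 1)), k ≤ j := by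
      have hne : (Finset.filter (fun j => SP (w (j + 1)) i) (Finset.Icc l ((n:ℤ) - 1))).Nonempty :=
        ⟨l, Finset.mem_filter.mpr ⟨Finset.mem_Icc.mpr ⟨le_refl l, hlN⟩, by rw [← hb]; exact hSPb⟩⟩
      exact ⟨Finset.max' _ hne, Finset.max'_mem _ hne, fun k hk => Finset.le_max' _ k hk⟩
    obtain ⟨hjIcc, hjSP⟩ := Finset.mem_filter.mp hjmem
    obtain ⟨hj1, hj2⟩ := Finset.mem_Icc.mp hjIcc
    have hnext : j ≤ (n:ℤ) - 2 → ¬ SP (w (j + 2)) i := by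
      intro hj hsp
      have hmem : j + 1 ∈ Finset.filter (fun j => SP (w (j + 1)) i) (Finset.Icc l ((n:ℤ) - 1)) :=
        Finset.mem_filter.mpr ⟨Finset.mem_Icc.mpr ⟨by omega, by omega⟩,
          by rw [show j + 1 + 1 = j + 2 by ring]; exact hsp⟩
      have := hjmax _ hmem; omega
    have hbnd := hgap (l + 1) (j + 1) (le_refl _) (by omega) (by omega)
    have hb3 : -(n:ℤ) ≤ w (l + 1) := (hshell (l + 1) (by omega) (by omega)).1
    have hSPj' := hjSP
    simp only [SP_def] at hSPj'
    have hlowb : j - ((n:ℤ) - 1) - l ≤ i := by omega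
    have hup : i ≤ j := by
      rcases le_or_gt i (-1) with hneg | hposle
      · omega
      · have hi1 : 1 ≤ i := by omega
        rcases le_or_gt j ((n:ℤ) - 2) with hj' | hj'
        · have hns := hnext hj'
          have hv' := hshell (j + 2) (by omega) (by omega)
          rcases le_or_gt 2 (w (j + 2)) with hv2 | hv2
          · have hlt : i < w (j + 2) := by simp only [SP_def] at hns; omega
            exact hcount i j hi1 hj1 hj' hlt hia
          · simp only [SP_def] at hns; omega
        · omega
    have habsb : |i| ≤ (n:ℤ) - 1 := abs_le.mpr ⟨by omega, by omega⟩
    have hnotmem : (i, j + 1) ∉ GammaD2 n w l := by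
      intro hcon
      obtain ⟨_, hj2', _, _, _, _, hsp'⟩ := (hΓ i (j + 1)).mp hcon
      rw [show j + 1 + 1 = j + 2 by ring] at hsp'
      exact hnext (by omega) hsp'
    exact ⟨(i, j), (hΛ i j).mpr ⟨⟨(hΓ i j).mpr ⟨hj1, hj2, hi0, hlowb, hup, habsb, hjSP⟩,
      hnotmem⟩, by omega⟩, rfl⟩
end
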